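/- arXiv:2308.04804 — 7 statements merged into one kernel-verified Lean document; each statement's English description precedes it below -/
import Mathlib

section
/- Let $0<n<1$, $k,L,v>0$, and define $\Phi(\xi) = (\xi^{-(n-1)} + kL(n-1)/v)^{-1/(n-1)}$. Then $\Phi$ is convex on the interval $(\xi_0, \infty)$ where $\xi_0 = (\frac{v}{kL(1-n)})^{-1/(1-n)}$. -/
open Real Set

theorem pfr_Phi_convex_of_n_lt_one
    (n k L v : ℝ) (hn0 : 0 < n) (hn1 : n < 1) (hk : 0 < k) (hL : 0 < L) (hv : 0 < v)
    (Φ : ℝ → ℝ)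
    (hΦ : ∀ ξ : ℝ, 0 < ξ →
      Φ ξ = (ξ ^ (-(n - 1)) + k * L * (n - 1) / v) ^ (-(1 / (n - 1)))) :
    ConvexOn ℝ (Set.Ioi ((v / (k * L * (1 - n))) ^ (-(1 / (1 - n))))) Φ := by
  set p : ℝ := 1 - n with hpdef
  have hp : 0 < p := by simp only [hpdef]; linarith
  have hp1 : p < 1 := by simp only [hpdef]; linarith
  set c : ℝ := k * L * (1 - n) / v with hcdef
  have hc : 0 < c := by
    apply div_pos _ hv
    exact mul_pos (mul_pos hk hL) (by linarith)
  set ξ0 : ℝ := (v / (k * L * (1 - n))) ^ (-(1 / (1 - n))) with hx0def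
  have hb : (0:ℝ) < v / (k * L * (1 - n)) := by
    exact div_pos hv (mul_pos (mul_pos hk hL) (by linarith))
  have hξ0 : 0 < ξ0 := Real.rpow_pos_of_pos hb _
  have hbc : (v / (k * L * (1 - n)))⁻¹ = c := by
    rw [hcdef]; field_simp
  have hξ0p : ξ0 ^ p = c := by
    rw [hx0def, ← Real.rpow_mul hb.le]
    have h1 : -(1 / (1 - n)) * p = -1 := by
      rw [hpdef]; field_simp
      rw [div_self (by linarith : (0:ℝ) < 1 - n).ne']
    rw [h1, Real.rpow_neg_one, hbc]
  -- key facts for points of the set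
  have hxpos : ∀ x ∈ Set.Ioi ξ0, 0 < x := fun x hx => lt_trans hξ0 hx
  have hupos : ∀ x ∈ Set.Ioi ξ0, 0 < x ^ p - c := by
    intro x hx
    have : ξ0 ^ p < x ^ p := Real.rpow_lt_rpow hξ0.le hx hp
    rw [hξ0p] at this; linarith
  set g : ℝ → ℝ := fun x => (x ^ p - c) ^ (1 / p) with hgdef
  set g₁ : ℝ → ℝ := fun x => (x ^ p - c) ^ (1 / p - 1) * x ^ (p - 1) with hg1def
  have hderiv : ∀ x ∈ Set.Ioi ξ0, HasDerivAt g (g₁ x) x := by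
    intro x hx
    have hx0 : 0 < x := hxpos x hx
    have hu : 0 < x ^ p - c := hupos x hx
    have h1 : HasDerivAt (fun y : ℝ => y ^ p - c) (p * x ^ (p - 1)) x := by
      simpa using (Real.hasDerivAt_rpow_const (p := p) (Or.inl hx0.ne')).sub_const c
    have h2 : HasDerivAt (fun t : ℝ => t ^ (1 / p))
        (1 / p * (x ^ p - c) ^ (1 / p - 1)) (x ^ p - c) :=
      Real.hasDerivAt_rpow_const (p := 1 / p) (Or.inl hu.ne')
    have := h2.comp (h := fun y : ℝ => y ^ p - c) x h1
    refine this.congr_deriv ?_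
    simp only [hg1def]
    rw [show 1 / p * (x ^ p - c) ^ (1 / p - 1) * (p * x ^ (p - 1))
        = (p * (1 / p)) * ((x ^ p - c) ^ (1 / p - 1) * x ^ (p - 1)) from by ring,
      mul_one_div_cancel hp.ne', one_mul]
  set D : ℝ → ℝ := fun x =>
    ((1 / p - 1) * (x ^ p - c) ^ (1 / p - 2) * (p * x ^ (p - 1))) * x ^ (p - 1)
      + (x ^ p - c) ^ (1 / p - 1) * ((p - 1) * x ^ (p - 2)) with hDdef
  have hderiv1 : ∀ x ∈ Set.Ioi ξ0, HasDerivAt g₁ (D x) x := by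
    intro x hx
    have hx0 : 0 < x := hxpos x hx
    have hu : 0 < x ^ p - c := hupos x hx
    have h1 : HasDerivAt (fun y : ℝ => y ^ p - c) (p * x ^ (p - 1)) x := by
      simpa using (Real.hasDerivAt_rpow_const (p := p) (Or.inl hx0.ne')).sub_const c
    have h2 : HasDerivAt (fun t : ℝ => t ^ (1 / p - 1))
        ((1 / p - 1) * (x ^ p - c) ^ (1 / p - 1 - 1)) (x ^ p - c) :=
      Real.hasDerivAt_rpow_const (p := 1 / p - 1) (Or.inl hu.ne')
    have h3 : HasDerivAt (fun y : ℝ => (y ^ p - c) ^ (1 / p - 1))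
        ((1 / p - 1) * (x ^ p - c) ^ (1 / p - 1 - 1) * (p * x ^ (p - 1))) x :=
      h2.comp (h := fun y : ℝ => y ^ p - c) x h1
    have h4 : HasDerivAt (fun y : ℝ => y ^ (p - 1)) ((p - 1) * x ^ (p - 1 - 1)) x :=
      Real.hasDerivAt_rpow_const (p := p - 1) (Or.inl hx0.ne')
    have := h3.mul h4
    refine this.congr_deriv ?_
    rw [hDdef]
    norm_num
    ring_nf
  have hDnonneg : ∀ x ∈ Set.Ioi ξ0, 0 ≤ D x := by
    intro x hx
    have hx0 : 0 < x := hxpos x hx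
    have hu : 0 < x ^ p - c := hupos x hx
    have e1 : (x ^ p - c) ^ (1 / p - 1) = (x ^ p - c) ^ (1 / p - 2) * (x ^ p - c) := by
      rw [← Real.rpow_add_one hu.ne']; ring_nf
    have e2 : x ^ (p - 1) * x ^ (p - 1) = x ^ (p - 2) * x ^ p := by
      rw [← Real.rpow_add hx0, ← Real.rpow_add hx0]; ring_nf
    have key : D x = (1 - p) * c * ((x ^ p - c) ^ (1 / p - 2) * x ^ (p - 2)) := by
      rw [hDdef]
      simp only
      rw [e1]
      have : ((1 / p - 1) * (x ^ p - c) ^ (1 / p - 2) * (p * x ^ (p - 1))) * x ^ (p - 1)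
          = (1 - p) * (x ^ p - c) ^ (1 / p - 2) * (x ^ (p - 1) * x ^ (p - 1)) := by
        field_simp
      rw [this, e2]
      ring
    rw [key]
    have hA : 0 ≤ (x ^ p - c) ^ (1 / p - 2) := (Real.rpow_pos_of_pos hu _).le
    have hB : 0 ≤ x ^ (p - 2) := (Real.rpow_pos_of_pos hx0 _).le
    have : 0 < 1 - p := by linarith
    positivity
  have hopen : IsOpen (Set.Ioi ξ0) := isOpen_Ioi
  have hint : interior (Set.Ioi ξ0) = Set.Ioi ξ0 := hopen.interior_eq
  have hgconv : ConvexOn ℝ (Set.Ioi ξ0) g := by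
    apply convexOn_of_deriv2_nonneg (convex_Ioi ξ0)
    · intro x hx
      exact (hderiv x hx).continuousAt.continuousWithinAt
    · rw [hint]
      intro x hx
      exact ((hderiv x hx).differentiableAt).differentiableWithinAt
    · rw [hint]
      intro x hx
      have hEq : Set.EqOn (deriv g) g₁ (Set.Ioi ξ0) := fun y hy => (hderiv y hy).deriv
      have hev : deriv g =ᶠ[nhds x] g₁ :=
        Filter.eventuallyEq_of_mem (hopen.mem_nhds hx) hEq
      have : HasDerivAt (deriv g) (D x) x := (hderiv1 x hx).congr_of_eventuallyEq hev
      exact this.differentiableAt.differentiableWithinAt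
    · rw [hint]
      intro x hx
      have hEq : Set.EqOn (deriv g) g₁ (Set.Ioi ξ0) := fun y hy => (hderiv y hy).deriv
      have hev : deriv g =ᶠ[nhds x] g₁ :=
        Filter.eventuallyEq_of_mem (hopen.mem_nhds hx) hEq
      have hD2 : HasDerivAt (deriv g) (D x) x := (hderiv1 x hx).congr_of_eventuallyEq hev
      have : deriv (deriv g) x = D x := hD2.deriv
      simpa [Function.iterate_succ, this] using hDnonneg x hx
  refine hgconv.congr ?_
  intro x hx
  have hx0 : 0 < x := hxpos x hx
  rw [hΦ x hx0, hgdef]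
  have e1 : -(n - 1) = p := by rw [hpdef]; ring
  have e2 : k * L * (n - 1) / v = -c := by rw [hcdef]; ring
  have e3 : -(1 / (n - 1)) = 1 / p := by
    rw [hpdef]
    have : n - 1 ≠ 0 := by intro h; linarith
    field_simp
    rw [show (n - 1) = -(1 - n) by ring, neg_div, div_self (by linarith : (0:ℝ) < 1 - n).ne']
  rw [e1, e2, e3]
  ring_nf
end

section
/- Let $\Phi:[C_{min},C_{max}]\to\mathbb{R}$ be concave and differentiable, and let $C_\mathcal{A}:[0,\tau]\to[C_{min},C_{max}]$ be measurable. Suppose there exist a constant $\widetilde{C}\in(C_{min},C_{max})$ and disjoint measurable sets $A^+, A^-\subseteq[0,\tau)$ with $\mu(A^+\cup A^-)=\tau$ such that $C_\mathcal{A}(t)\ge\widetilde{C}$ a.e. on $A^+$ and $C_\mathcal{A}(t)\le\widetilde{C}$ a.e. on $A^-$. Define the bang-bang function $C_b(t)=C_{max}$ for $t\in A^+$ and $C_b(t)=C_{min}$ for $t\in A^-$, and assume $\int_0^\tau C_b(t)\,dt = \int_0^\tau C_\mathcal{A}(t)\,dt$. If $\Phi'$ is nonincreasing, then $\int_0^\tau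 \Phi(C_b(t))\,dt \le \int_0^\tau \Phi(C_\mathcal{A}(t))\,dt$. -/
open Real Set MeasureTheory intervalIntegral

/-- Gradient-type inequality from the MVT and monotonicity of the derivative. -/
lemma bangbang_key (Cmin Cmax : ℝ) (Φ Φ' : ℝ → ℝ)
    (hderiv : ∀ x ∈ Set.Icc Cmin Cmax, HasDerivAt Φ (Φ' x) x)
    (hanti : AntitoneOn Φ' (Set.Icc Cmin Cmax))
    {a b z : ℝ} (ha : a ∈ Set.Icc Cmin Cmax) (hb : b ∈ Set.Icc Cmin Cmax)
    (hz : z ∈ Set.Icc Cmin Cmax)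
    (h : (z ≤ b ∧ b ≤ a) ∨ (a ≤ b ∧ b ≤ z)) :
    Φ a - Φ b ≤ Φ' z * (a - b) := by
  have hcont : ContinuousOn Φ (Set.Icc Cmin Cmax) :=
    fun x hx => (hderiv x hx).continuousAt.continuousWithinAt
  rcases h with ⟨hzb, hba⟩ | ⟨hab, hbz⟩
  · rcases eq_or_lt_of_le hba with rfl | hba
    · simp
    · obtain ⟨c, hc, hceq⟩ := exists_hasDerivAt_eq_slope Φ Φ' hba
        (hcont.mono (Set.Icc_subset_Icc hb.1 ha.2))
        (fun x hx => hderiv x ⟨hb.1.trans hx.1.le, hx.2.le.trans ha.2⟩)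
      have hcI : c ∈ Set.Icc Cmin Cmax := ⟨hb.1.trans hc.1.le, hc.2.le.trans ha.2⟩
      have h1 : Φ a - Φ b = Φ' c * (a - b) := by
        field_simp [sub_ne_zero.2 (ne_of_gt hba)] at hceq
        linarith [hceq]
      rw [h1]
      have h2 : Φ' c ≤ Φ' z := hanti hz hcI (hzb.trans hc.1.le)
      nlinarith [h2, sub_nonneg.2 hba.le]
  · rcases eq_or_lt_of_le hab with rfl | hab
    · simp
    · obtain ⟨c, hc, hceq⟩ := exists_hasDerivAt_eq_slope Φ Φ' hab
        (hcont.mono (Set.Icc_subset_Icc ha.1 hb.2))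
        (fun x hx => hderiv x ⟨ha.1.trans hx.1.le, hx.2.le.trans hb.2⟩)
      have hcI : c ∈ Set.Icc Cmin Cmax := ⟨ha.1.trans hc.1.le, hc.2.le.trans hb.2⟩
      have h1 : Φ a - Φ b = Φ' c * (a - b) := by
        field_simp [sub_ne_zero.2 (ne_of_gt hab)] at hceq
        linarith [hceq]
      rw [h1]
      have h2 : Φ' z ≤ Φ' c := hanti hcI hz (hc.2.le.trans hbz)
      nlinarith [h2, sub_nonneg.2 hab.le]

theorem bangbang_comparison
    (τ Cmin Cmax Ctilde : ℝ) (hτ : 0 < τ) (hC : 0 < Cmin) (hCC : Cmin < Cmax)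
    (hCt : Ctilde ∈ Set.Ioo Cmin Cmax)
    (Φ Φ' : ℝ → ℝ)
    (hconc : ConcaveOn ℝ (Set.Icc Cmin Cmax) Φ)
    (hderiv : ∀ x ∈ Set.Icc Cmin Cmax, HasDerivAt Φ (Φ' x) x)
    (hanti : AntitoneOn Φ' (Set.Icc Cmin Cmax))
    (CA : ℝ → ℝ) (hmeas : Measurable CA)
    (hrange : ∀ t, CA t ∈ Set.Icc Cmin Cmax)
    (Aplus Aminus : Set ℝ)
    (hAp : MeasurableSet Aplus) (hAm : MeasurableSet Aminus)
    (hApsub : Aplus ⊆ Set.Ico 0 τ) (hAmsub : Aminus ⊆ Set.Ico 0 τ)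
    (hdisj : Disjoint Aplus Aminus)
    (hunion : volume (Aplus ∪ Aminus) = ENNReal.ofReal τ)
    (hup : ∀ᵐ t ∂(volume.restrict Aplus), Ctilde ≤ CA t)
    (hdown : ∀ᵐ t ∂(volume.restrict Aminus), CA t ≤ Ctilde)
    (Cb : ℝ → ℝ) (hmeasb : Measurable Cb)
    (hCbp : ∀ t ∈ Aplus, Cb t = Cmax) (hCbm : ∀ t ∈ Aminus, Cb t = Cmin)
    (hiso : ∫ t in (0 : ℝ)..τ, Cb t = ∫ t in (0 : ℝ)..τ, CA t) :
    ∫ t in (0 : ℝ)..τ, Φ (Cb t) ≤ ∫ t in (0 : ℝ)..τ, Φ (CA t) := by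
  set S := Aplus ∪ Aminus with hS
  have hSmeas : MeasurableSet S := hAp.union hAm
  have hSsub : S ⊆ Set.Ico 0 τ := Set.union_subset hApsub hAmsub
  have hIcoτ : volume (Set.Ico (0:ℝ) τ) = ENNReal.ofReal τ := by
    simp [Real.volume_Ico]
  -- the complement of S in Ico 0 τ is null
  have hnull : volume (Set.Ico (0:ℝ) τ \ S) = 0 := by
    have h1 : volume (Set.Ico (0:ℝ) τ \ S) = volume (Set.Ico (0:ℝ) τ) - volume S := by
      apply measure_diff hSsub hSmeas.nullMeasurableSet
      rw [hunion]; exact ENNReal.ofReal_ne_top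
    rw [h1, hIcoτ, hunion, tsub_self]
  -- a.e. on Ioc 0 τ, points are in S
  have haeS : ∀ᵐ t ∂(volume.restrict (Set.Ioc (0:ℝ) τ)), t ∈ S := by
    rw [ae_restrict_iff' measurableSet_Ioc]
    have : volume ((Set.Ico (0:ℝ) τ \ S) ∪ {τ}) = 0 := by
      refine measure_union_null hnull (measure_singleton τ)
    filter_upwards [measure_eq_zero_iff_ae_notMem.mp this] with t ht htI
    by_contra hts
    exact ht (by
      rcases eq_or_lt_of_le htI.2 with rfl | hlt
      · exact Or.inr rfl
      · exact Or.inl ⟨⟨htI.1.le, hlt⟩, hts⟩)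
  have hup' : ∀ᵐ t ∂(volume : Measure ℝ), t ∈ Aplus → Ctilde ≤ CA t :=
    (ae_restrict_iff' hAp).mp hup
  have hdown' : ∀ᵐ t ∂(volume : Measure ℝ), t ∈ Aminus → CA t ≤ Ctilde :=
    (ae_restrict_iff' hAm).mp hdown
  have hCtI : Ctilde ∈ Set.Icc Cmin Cmax := ⟨hCt.1.le, hCt.2.le⟩
  -- pointwise a.e. inequality
  have hae : ∀ᵐ t ∂(volume.restrict (Set.Ioc (0:ℝ) τ)),
      Φ (Cb t) ≤ Φ (CA t) + Φ' Ctilde * (Cb t - CA t) := by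
    filter_upwards [haeS, ae_restrict_of_ae hup', ae_restrict_of_ae hdown'] with t hts hu hd
    rcases hts with htp | htm
    · have := bangbang_key Cmin Cmax Φ Φ' hderiv hanti
        (a := Cmax) (b := CA t) (z := Ctilde)
        ⟨hCC.le, le_refl _⟩ (hrange t) hCtI (Or.inl ⟨hu htp, (hrange t).2⟩)
      rw [hCbp t htp]; linarith
    · have := bangbang_key Cmin Cmax Φ Φ' hderiv hanti
        (a := Cmin) (b := CA t) (z := Ctilde)
        ⟨le_refl _, hCC.le⟩ (hrange t) hCtI (Or.inr ⟨(hrange t).1, hd htm⟩)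
      rw [hCbm t htm]; linarith
  -- Cb ∈ Icc a.e.
  have haeCb : ∀ᵐ t ∂(volume.restrict (Set.Ioc (0:ℝ) τ)), Cb t ∈ Set.Icc Cmin Cmax := by
    filter_upwards [haeS] with t hts
    rcases hts with htp | htm
    · rw [hCbp t htp]; exact ⟨hCC.le, le_refl _⟩
    · rw [hCbm t htm]; exact ⟨le_refl _, hCC.le⟩
  -- bound for Φ on the compact interval
  have hΦc : ContinuousOn Φ (Set.Icc Cmin Cmax) :=
    fun x hx => (hderiv x hx).continuousAt.continuousWithinAt
  -- a continuous extension of Φ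
  set g : ℝ → ℝ := fun x => min Cmax (max Cmin x) with hg
  have hgmem : ∀ x, g x ∈ Set.Icc Cmin Cmax := fun x =>
    ⟨le_min hCC.le (le_max_left _ _), min_le_left _ _⟩
  have hgid : ∀ x ∈ Set.Icc Cmin Cmax, g x = x := fun x hx => by
    simp [hg, max_eq_right hx.1, min_eq_right hx.2]
  have hΨc : Continuous (fun x => Φ (g x)) :=
    hΦc.comp_continuous (continuous_const.min (continuous_const.max continuous_id)) hgmem
  obtain ⟨M, hM⟩ := isCompact_Icc.exists_bound_of_continuousOn hΦc
  have hfin : volume (Set.Ioc (0:ℝ) τ) ≠ ⊤ := by simp [Real.volume_Ioc]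
  have hconst : ∀ c : ℝ, IntegrableOn (fun _ : ℝ => c) (Set.Ioc (0:ℝ) τ) := fun c =>
    integrableOn_const hfin
  -- integrability facts
  have hB : (0:ℝ) ≤ max |Cmin| |Cmax| := le_trans (abs_nonneg _) (le_max_left _ _)
  have hboundIcc : ∀ x, x ∈ Set.Icc Cmin Cmax → ‖x‖ ≤ max |Cmin| |Cmax| := by
    intro x hx
    rw [Real.norm_eq_abs, abs_le]
    constructor
    · have := neg_abs_le Cmin; have := le_max_left |Cmin| |Cmax|; linarith [hx.1]
    · have := le_abs_self Cmax; have := le_max_right |Cmin| |Cmax|; linarith [hx.2]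
  have hintCA : IntegrableOn CA (Set.Ioc (0:ℝ) τ) := by
    refine (hconst (max |Cmin| |Cmax|)).mono' hmeas.aestronglyMeasurable.restrict ?_
    exact Filter.Eventually.of_forall fun t => hboundIcc _ (hrange t)
  have hintCb : IntegrableOn Cb (Set.Ioc (0:ℝ) τ) := by
    refine (hconst (max |Cmin| |Cmax|)).mono' hmeasb.aestronglyMeasurable.restrict ?_
    filter_upwards [haeCb] with t ht using hboundIcc _ ht
  have hintΦCA : IntegrableOn (fun t => Φ (CA t)) (Set.Ioc (0:ℝ) τ) := by
    have hm : AEStronglyMeasurable (fun t => Φ (CA t)) (volume.restrict (Set.Ioc (0:ℝ) τ)) := by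
      have : (fun t => Φ (CA t)) = fun t => Φ (g (CA t)) := by
        funext t; rw [hgid _ (hrange t)]
      rw [this]
      exact ((hΨc.measurable.comp hmeas).aestronglyMeasurable).restrict
    refine (hconst M).mono' hm ?_
    exact Filter.Eventually.of_forall fun t => hM _ (hrange t)
  have hintΦCb : IntegrableOn (fun t => Φ (Cb t)) (Set.Ioc (0:ℝ) τ) := by
    have hm : AEStronglyMeasurable (fun t => Φ (Cb t)) (volume.restrict (Set.Ioc (0:ℝ) τ)) := by
      refine AEStronglyMeasurable.congr
        (((hΨc.measurable.comp hmeasb).aestronglyMeasurable).restrict) ?_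
      filter_upwards [haeCb] with t ht
      simp only [Function.comp_apply]
      rw [hgid _ ht]
    refine (hconst M).mono' hm ?_
    filter_upwards [haeCb] with t ht using hM _ ht
  -- integrate the inequality
  have hintsub : IntegrableOn (fun t => Cb t - CA t) (Set.Ioc (0:ℝ) τ) := hintCb.sub hintCA
  have hintmul : IntegrableOn (fun t => Φ' Ctilde * (Cb t - CA t)) (Set.Ioc (0:ℝ) τ) :=
    hintsub.const_mul _
  have hintRHS : IntegrableOn (fun t => Φ (CA t) + Φ' Ctilde * (Cb t - CA t))
      (Set.Ioc (0:ℝ) τ) :=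
    hintΦCA.add hintmul
  have hmain : ∫ t in Set.Ioc (0:ℝ) τ, Φ (Cb t) ≤
      ∫ t in Set.Ioc (0:ℝ) τ, (Φ (CA t) + Φ' Ctilde * (Cb t - CA t)) :=
    integral_mono_ae hintΦCb hintRHS hae
  have hiso' : ∫ t in Set.Ioc (0:ℝ) τ, Cb t = ∫ t in Set.Ioc (0:ℝ) τ, CA t := by
    rw [intervalIntegral.integral_of_le hτ.le, intervalIntegral.integral_of_le hτ.le] at hiso
    exact hiso
  have hsplit : ∫ t in Set.Ioc (0:ℝ) τ, (Φ (CA t) + Φ' Ctilde * (Cb t - CA t)) =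
      ∫ t in Set.Ioc (0:ℝ) τ, Φ (CA t) := by
    rw [integral_add hintΦCA hintmul, MeasureTheory.integral_const_mul,
      integral_sub hintCb hintCA, hiso', sub_self, mul_zero, add_zero]
  rw [intervalIntegral.integral_of_le hτ.le, intervalIntegral.integral_of_le hτ.le]
  calc ∫ t in Set.Ioc (0:ℝ) τ, Φ (Cb t) ≤ _ := hmain
    _ = _ := hsplit
end

section
/- Let $u:[0,\tau)\to[C_{min},C_{max}]$ be measurable with $\frac{1}{\tau}\int_0^\tau u(t)\,dt = \overline{C}$, where $C_{min}<\overline{C}<C_{max}$. Set $\mu_+ = \frac{\overline{C}-C_{min}}{C_{max}-C_{min}}\tau$. Then there exists $\widetilde{C}\in(C_{min},C_{max})$ and disjoint measurable sets $A^+,A^-\subseteq[0,\tau)$ with $\mu(A^+)=\mu_+$, $\mu(A^-)=\tau-\mu_+$, $u(t)\ge\widetilde{C}$ a.e. on $A^+$, and $u(t)\le\widetilde{C}$ a.e. on $A^-$. -/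
open Real Set MeasureTheory intervalIntegral

set_option maxHeartbeats 1000000

lemma exists_subset_volume_eq {τ : ℝ} (hτ : 0 ≤ τ) (s : Set ℝ) (hs : MeasurableSet s)
    (hsub : s ⊆ Set.Ico 0 τ) {r : ℝ} (hr : 0 ≤ r)
    (hrs : ENNReal.ofReal r ≤ volume s) :
    ∃ t, t ⊆ s ∧ MeasurableSet t ∧ volume t = ENNReal.ofReal r := by
  have hfin : volume s < ⊤ := lt_of_le_of_lt (measure_mono hsub)
    (by rw [Real.volume_Ico]; exact ENNReal.ofReal_lt_top)
  set f : ℝ → ℝ := fun x => (volume (s ∩ Set.Ico 0 x)).toReal with hf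
  have hfinx : ∀ x, volume (s ∩ Set.Ico 0 x) ≠ ⊤ := fun x =>
    (lt_of_le_of_lt (measure_mono Set.inter_subset_left) hfin).ne
  have hmono : ∀ a b : ℝ, a ≤ b → f a ≤ f b := by
    intro a b hab
    exact ENNReal.toReal_mono (hfinx b)
      (measure_mono (Set.inter_subset_inter_right _ (Set.Ico_subset_Ico_right hab)))
  have key : ∀ a b : ℝ, a ≤ b → f b ≤ f a + (b - a) := by
    intro a b hab
    have h1 : s ∩ Set.Ico 0 b ⊆ (s ∩ Set.Ico 0 a) ∪ Set.Ico a b := by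
      rintro t ⟨hts, ht0, htb⟩
      by_cases h : t < a
      · exact Or.inl ⟨hts, ht0, h⟩
      · exact Or.inr ⟨not_lt.1 h, htb⟩
    have h2 : volume (s ∩ Set.Ico 0 b) ≤ volume (s ∩ Set.Ico 0 a) + ENNReal.ofReal (b - a) := by
      refine (measure_mono h1).trans ((measure_union_le _ _).trans ?_)
      rw [Real.volume_Ico]
    calc f b ≤ ((volume (s ∩ Set.Ico 0 a)) + ENNReal.ofReal (b - a)).toReal :=
          ENNReal.toReal_mono (by simp [hfinx a, ENNReal.add_ne_top]) h2
      _ = f a + (b - a) := by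
          rw [ENNReal.toReal_add (hfinx a) ENNReal.ofReal_ne_top,
            ENNReal.toReal_ofReal (by linarith)]
  have hlip : LipschitzWith 1 f := by
    refine LipschitzWith.of_dist_le_mul fun x y => ?_
    rw [NNReal.coe_one, one_mul, Real.dist_eq, Real.dist_eq, abs_le]
    rcases le_total x y with h | h
    · rw [abs_of_nonpos (by linarith : x - y ≤ 0)]
      constructor <;> linarith [key x y h, hmono x y h]
    · rw [abs_of_nonneg (by linarith : 0 ≤ x - y)]
      constructor <;> linarith [key y x h, hmono y x h]
  have h0 : f 0 = 0 := by simp [hf]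
  have hτ' : r ≤ f τ := by
    have hss : s ∩ Set.Ico 0 τ = s := Set.inter_eq_left.2 hsub
    rw [hf]
    simp only [hss]
    calc r = (ENNReal.ofReal r).toReal := (ENNReal.toReal_ofReal hr).symm
      _ ≤ (volume s).toReal := ENNReal.toReal_mono hfin.ne hrs
  have hivt : r ∈ f '' Set.Icc 0 τ := by
    apply intermediate_value_Icc hτ hlip.continuous.continuousOn
    exact ⟨by rw [h0]; exact hr, hτ'⟩
  obtain ⟨x, -, hx⟩ := hivt
  refine ⟨s ∩ Set.Ico 0 x, Set.inter_subset_left, hs.inter measurableSet_Ico, ?_⟩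
  rw [← ENNReal.ofReal_toReal (hfinx x)]
  exact congrArg ENNReal.ofReal hx


theorem levelset_decomposition
    (τ Cmin Cmax Cbar : ℝ) (hτ : 0 < τ) (hC : 0 < Cmin)
    (h1 : Cmin < Cbar) (h2 : Cbar < Cmax)
    (u : ℝ → ℝ) (hmeas : Measurable u)
    (hrange : ∀ t ∈ Set.Ico (0 : ℝ) τ, u t ∈ Set.Icc Cmin Cmax)
    (hmean : (1 / τ) * ∫ t in (0 : ℝ)..τ, u t = Cbar) :
    ∃ Ctilde ∈ Set.Ioo Cmin Cmax, ∃ Aplus Aminus : Set ℝ,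
      MeasurableSet Aplus ∧ MeasurableSet Aminus ∧
      Aplus ⊆ Set.Ico 0 τ ∧ Aminus ⊆ Set.Ico 0 τ ∧
      Disjoint Aplus Aminus ∧
      volume Aplus = ENNReal.ofReal ((Cbar - Cmin) / (Cmax - Cmin) * τ) ∧
      volume Aminus = ENNReal.ofReal (τ - (Cbar - Cmin) / (Cmax - Cmin) * τ) ∧
      (∀ᵐ t ∂(volume.restrict Aplus), Ctilde ≤ u t) ∧
      (∀ᵐ t ∂(volume.restrict Aminus), u t ≤ Ctilde) := by
  set I : Set ℝ := Set.Ico (0:ℝ) τ with hIdef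
  have hImeas : MeasurableSet I := measurableSet_Ico
  have hIvol : volume I = ENNReal.ofReal τ := by rw [hIdef, Real.volume_Ico, sub_zero]
  set μp : ℝ := (Cbar - Cmin) / (Cmax - Cmin) * τ with hμpdef
  have hd : (0:ℝ) < Cmax - Cmin := by linarith
  have hμp0 : 0 < μp := by
    apply mul_pos (div_pos (by linarith) hd) hτ
  have hμpτ : μp < τ := by
    rw [hμpdef, div_mul_eq_mul_div, div_lt_iff₀ hd]
    nlinarith
  have hμpkey : μp * (Cmax - Cmin) = (Cbar - Cmin) * τ := by
    rw [hμpdef]; field_simp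
  -- the integral over I
  haveI hIfin : IsFiniteMeasure (volume.restrict I) :=
    ⟨by rw [Measure.restrict_apply_univ, hIvol]; exact ENNReal.ofReal_lt_top⟩
  have hIu : IntegrableOn u I := by
    refine Integrable.mono' (integrable_const Cmax) hmeas.aestronglyMeasurable ?_
    refine (ae_restrict_iff' hImeas).2 (Filter.Eventually.of_forall fun t ht => ?_)
    rcases hrange t ht with ⟨hl, hr⟩
    rw [Real.norm_eq_abs, abs_of_nonneg (le_trans hC.le hl)]
    exact hr
  have hint : ∫ t in I, u t = Cbar * τ := by
    have ha : ∫ t in (0:ℝ)..τ, u t = ∫ t in Set.Ioc (0:ℝ) τ, u t :=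
      intervalIntegral.integral_of_le hτ.le
    have hb : ∫ t in Set.Ioc (0:ℝ) τ, u t = ∫ t in Set.Ioo (0:ℝ) τ, u t :=
      MeasureTheory.integral_Ioc_eq_integral_Ioo
    have hc : ∫ t in Set.Ico (0:ℝ) τ, u t = ∫ t in Set.Ioo (0:ℝ) τ, u t :=
      MeasureTheory.integral_Ico_eq_integral_Ioo
    rw [hIdef, hc, ← hb, ← ha]
    field_simp at hmean
    linarith [hmean]
  -- level sets
  set E : ℝ → Set ℝ := fun c => I ∩ {t | c ≤ u t} with hEdef
  have hEmeas : ∀ c, MeasurableSet (E c) := fun c => hImeas.inter (hmeas measurableSet_Ici)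
  have hEfin : ∀ c, volume (E c) ≠ ⊤ := fun c =>
    (lt_of_le_of_lt (measure_mono Set.inter_subset_left)
      (by rw [hIvol]; exact ENNReal.ofReal_lt_top)).ne
  have hEmono : ∀ c₁ c₂, c₁ ≤ c₂ → E c₂ ⊆ E c₁ := fun c₁ c₂ h =>
    Set.inter_subset_inter_right _ (fun t ht => le_trans h ht)
  set H : ℝ → ℝ := fun c => (volume (E c)).toReal with hHdef
  have hH0 : ∀ c, 0 ≤ H c := fun c => ENNReal.toReal_nonneg
  have hHμp : ∀ c, volume (E c) ≤ ENNReal.ofReal μp ↔ H c ≤ μp := by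
    intro c
    rw [hHdef]
    constructor
    · intro h
      calc (volume (E c)).toReal ≤ (ENNReal.ofReal μp).toReal :=
            ENNReal.toReal_mono ENNReal.ofReal_ne_top h
        _ = μp := ENNReal.toReal_ofReal hμp0.le
    · intro h
      calc volume (E c) = ENNReal.ofReal ((volume (E c)).toReal) :=
            (ENNReal.ofReal_toReal (hEfin c)).symm
        _ ≤ ENNReal.ofReal μp := ENNReal.ofReal_le_ofReal h
  -- integral of indicator
  have hind : ∀ c : ℝ, ∫ t in I, ({s | c ≤ u s}).indicator (fun _ => (1:ℝ)) t = H c := by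
    intro c
    rw [setIntegral_indicator (show MeasurableSet {s | c ≤ u s} from hmeas measurableSet_Ici),
      setIntegral_const, smul_eq_mul, mul_one]
    rfl
  have hindInt : ∀ c : ℝ, IntegrableOn (({s | c ≤ u s}).indicator (fun _ => (1:ℝ))) I :=
    fun c => (integrable_const (1:ℝ)).indicator (hmeas measurableSet_Ici)
  -- upper bound
  have up : ∀ c₁ c₂, c₁ ≤ c₂ → c₂ ≤ Cmax →
      Cbar * τ ≤ c₁ * τ + (c₂ - c₁) * H c₁ + (Cmax - c₂) * H c₂ := by
    intro c₁ c₂ h12 h2m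
    set g : ℝ → ℝ := fun t => c₁ + (c₂ - c₁) * ({s | c₁ ≤ u s}).indicator (fun _ => (1:ℝ)) t
        + (Cmax - c₂) * ({s | c₂ ≤ u s}).indicator (fun _ => (1:ℝ)) t with hgdef
    have hi1 : IntegrableOn (fun t => (c₂ - c₁) * ({s | c₁ ≤ u s}).indicator (fun _ => (1:ℝ)) t) I :=
      (hindInt c₁).const_mul _
    have hi2 : IntegrableOn (fun t => (Cmax - c₂) * ({s | c₂ ≤ u s}).indicator (fun _ => (1:ℝ)) t) I :=
      (hindInt c₂).const_mul _
    have hgint : IntegrableOn g I := ((integrable_const c₁).add hi1).add hi2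
    have hptwise : ∀ t ∈ I, u t ≤ g t := by
      intro t ht
      rcases hrange t ht with ⟨hl, hr⟩
      rw [hgdef]
      by_cases hb2 : c₂ ≤ u t
      · have hb1 : c₁ ≤ u t := le_trans h12 hb2
        simp only [Set.indicator_apply, Set.mem_setOf_eq, if_pos hb1, if_pos hb2, mul_one]
        linarith
      · by_cases hb1 : c₁ ≤ u t
        · simp only [Set.indicator_apply, Set.mem_setOf_eq, if_pos hb1, if_neg hb2, mul_one,
            mul_zero]
          push_neg at hb2
          linarith
        · simp only [Set.indicator_apply, Set.mem_setOf_eq, if_neg hb1, if_neg hb2, mul_zero]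
          push_neg at hb1
          linarith
    have hle := setIntegral_mono_on hIu hgint hImeas hptwise
    rw [hint] at hle
    refine hle.trans (le_of_eq ?_)
    have hsum : IntegrableOn (fun t => c₁ + (c₂ - c₁) * ({s | c₁ ≤ u s}).indicator
        (fun _ => (1:ℝ)) t) I := (integrable_const c₁).add hi1
    rw [hgdef]
    rw [integral_add hsum hi2, integral_add (integrable_const c₁) hi1,
      setIntegral_const, MeasureTheory.integral_const_mul, MeasureTheory.integral_const_mul, hind c₁, hind c₂, measureReal_def, hIvol,
      ENNReal.toReal_ofReal hτ.le, smul_eq_mul, mul_comm τ c₁]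
  -- lower bound
  have low : ∀ c₁ c₂, Cmin ≤ c₁ → c₁ ≤ c₂ →
      Cmin * τ + (c₁ - Cmin) * H c₁ + (c₂ - c₁) * H c₂ ≤ Cbar * τ := by
    intro c₁ c₂ h01 h12
    set g : ℝ → ℝ := fun t => Cmin + (c₁ - Cmin) * ({s | c₁ ≤ u s}).indicator (fun _ => (1:ℝ)) t
        + (c₂ - c₁) * ({s | c₂ ≤ u s}).indicator (fun _ => (1:ℝ)) t with hgdef
    have hi1 : IntegrableOn (fun t => (c₁ - Cmin) * ({s | c₁ ≤ u s}).indicator (fun _ => (1:ℝ)) t) I :=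
      (hindInt c₁).const_mul _
    have hi2 : IntegrableOn (fun t => (c₂ - c₁) * ({s | c₂ ≤ u s}).indicator (fun _ => (1:ℝ)) t) I :=
      (hindInt c₂).const_mul _
    have hgint : IntegrableOn g I := ((integrable_const Cmin).add hi1).add hi2
    have hptwise : ∀ t ∈ I, g t ≤ u t := by
      intro t ht
      rcases hrange t ht with ⟨hl, hr⟩
      rw [hgdef]
      by_cases hb2 : c₂ ≤ u t
      · have hb1 : c₁ ≤ u t := le_trans h12 hb2
        simp only [Set.indicator_apply, Set.mem_setOf_eq, if_pos hb1, if_pos hb2, mul_one]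
        linarith
      · by_cases hb1 : c₁ ≤ u t
        · simp only [Set.indicator_apply, Set.mem_setOf_eq, if_pos hb1, if_neg hb2, mul_one,
            mul_zero]
          linarith
        · simp only [Set.indicator_apply, Set.mem_setOf_eq, if_neg hb1, if_neg hb2, mul_zero]
          linarith
    have hle := setIntegral_mono_on hgint hIu hImeas hptwise
    rw [hint] at hle
    refine le_trans (le_of_eq ?_) hle
    have hsum : IntegrableOn (fun t => Cmin + (c₁ - Cmin) * ({s | c₁ ≤ u s}).indicator
        (fun _ => (1:ℝ)) t) I := (integrable_const Cmin).add hi1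
    rw [hgdef]
    rw [integral_add hsum hi2, integral_add (integrable_const Cmin) hi1,
      setIntegral_const, MeasureTheory.integral_const_mul, MeasureTheory.integral_const_mul, hind c₁, hind c₂, measureReal_def, hIvol,
      ENNReal.toReal_ofReal hτ.le, smul_eq_mul, mul_comm τ Cmin]
  -- main case analysis: produce Ctilde with the two measure bounds
  obtain ⟨Ct, hCt, hFCt, hECt⟩ :
      ∃ Ct, Ct ∈ Set.Ioo Cmin Cmax ∧
        volume (I ∩ {t | Ct < u t}) ≤ ENNReal.ofReal μp ∧
        ENNReal.ofReal μp ≤ volume (E Ct) := by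
    by_cases hcase : ENNReal.ofReal μp ≤ volume (E Cmax)
    · -- Case 1 : midpoint works
      set m := (Cmin + Cmax) / 2 with hm
      have hm1 : Cmin < m := by rw [hm]; linarith
      have hm2 : m < Cmax := by rw [hm]; linarith
      have hHCmax : μp ≤ H Cmax := by
        rw [hHdef]
        calc μp = (ENNReal.ofReal μp).toReal := (ENNReal.toReal_ofReal hμp0.le).symm
          _ ≤ _ := ENNReal.toReal_mono (hEfin Cmax) hcase
      have hlow := low m Cmax hm1.le hm2.le
      have hCbarτ : Cbar * τ = Cmin * τ + μp * (Cmax - Cmin) := by linarith [hμpkey]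
      have k1 : (Cmax - m) * μp ≤ (Cmax - m) * H Cmax :=
        mul_le_mul_of_nonneg_left hHCmax (by linarith)
      have k2 : (m - Cmin) * H m ≤ (m - Cmin) * μp := by nlinarith [hlow, k1, hCbarτ]
      have hHm : H m ≤ μp := le_of_mul_le_mul_left k2 (by linarith)
      refine ⟨m, ⟨hm1, hm2⟩, ?_, ?_⟩
      · calc volume (I ∩ {t | m < u t}) ≤ volume (E m) :=
            measure_mono (Set.inter_subset_inter_right _ fun t (ht : m < u t) => (le_of_lt ht : m ≤ u t))
          _ ≤ ENNReal.ofReal μp := (hHμp m).2 hHm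
      · exact le_trans hcase (measure_mono (hEmono m Cmax hm2.le))
    · push_neg at hcase
      set S : Set ℝ := {c | c ∈ Set.Icc Cmin Cmax ∧ ENNReal.ofReal μp ≤ volume (E c)} with hSdef
      have hCminS : Cmin ∈ S := by
        refine ⟨⟨le_refl _, by linarith⟩, ?_⟩
        have hEC : E Cmin = I := Set.inter_eq_left.2 fun t ht => (hrange t ht).1
        rw [hEC, hIvol]
        exact ENNReal.ofReal_le_ofReal hμpτ.le
      have hSbdd : BddAbove S := ⟨Cmax, fun c hc => hc.1.2⟩
      set a := sSup S with hadef
      have haCmin : Cmin ≤ a := le_csSup hSbdd hCminS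
      have haCmax : a ≤ Cmax := csSup_le ⟨Cmin, hCminS⟩ fun c hc => hc.1.2
      have claim_a : ∀ c, c < a → ENNReal.ofReal μp ≤ volume (E c) := by
        intro c hc
        obtain ⟨s, hsS, hcs⟩ := exists_lt_of_lt_csSup ⟨Cmin, hCminS⟩ hc
        exact le_trans hsS.2 (measure_mono (hEmono c s hcs.le))
      have claim_b : ∀ c, a < c → c ≤ Cmax → volume (E c) < ENNReal.ofReal μp := by
        intro c hac hcm
        by_contra hcon
        push_neg at hcon
        exact absurd (le_csSup hSbdd ⟨⟨le_trans haCmin hac.le, hcm⟩, hcon⟩) (not_le.2 hac)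
      have haCmin' : Cmin < a := by
        by_contra hcon
        push_neg at hcon
        -- then H c < μp for all c in (Cmin, Cmax]
        set c₂ := (Cmin + Cmax) / 2 with hc₂def
        have hc₂1 : Cmin < c₂ := by rw [hc₂def]; linarith
        have hc₂2 : c₂ < Cmax := by rw [hc₂def]; linarith
        have hb₂ := claim_b c₂ (lt_of_le_of_lt hcon hc₂1) hc₂2.le
        have hHc₂ : H c₂ < μp := by
          rw [hHdef]
          calc (volume (E c₂)).toReal < (ENNReal.ofReal μp).toReal :=
              (ENNReal.toReal_lt_toReal (hEfin c₂) ENNReal.ofReal_ne_top).2 hb₂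
            _ = μp := ENNReal.toReal_ofReal hμp0.le
        set δ := (Cmax - c₂) * (μp - H c₂) with hδdef
        have hδ0 : 0 < δ := mul_pos (by linarith) (by linarith)
        set ε := min (c₂ - Cmin) (δ / (τ - μp)) / 2 with hεdef
        have hε0 : 0 < ε := by
          rw [hεdef]
          have h2 : 0 < min (c₂ - Cmin) (δ / (τ - μp)) :=
            lt_min (by linarith) (div_pos hδ0 (by linarith))
          linarith
        have hε1 : ε ≤ (c₂ - Cmin) / 2 := by
          rw [hεdef]
          have := min_le_left (c₂ - Cmin) (δ / (τ - μp))
          linarith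
        have hε2 : ε * (τ - μp) ≤ δ / 2 := by
          have hmin : ε ≤ δ / (τ - μp) / 2 := by
            rw [hεdef]
            have := min_le_right (c₂ - Cmin) (δ / (τ - μp))
            linarith
          have hτμ : (0:ℝ) < τ - μp := by linarith
          calc ε * (τ - μp) ≤ δ / (τ - μp) / 2 * (τ - μp) :=
              mul_le_mul_of_nonneg_right hmin hτμ.le
            _ = δ / 2 := by field_simp
        set c₁ := Cmin + ε with hc₁def
        have hc₁1 : Cmin < c₁ := by rw [hc₁def]; linarith
        have hc₁2 : c₁ ≤ c₂ := by rw [hc₁def]; linarith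
        have hb₁ := claim_b c₁ (lt_of_le_of_lt hcon hc₁1) (by linarith)
        have hHc₁ : H c₁ ≤ μp := by
          rw [hHdef]
          calc (volume (E c₁)).toReal ≤ (ENNReal.ofReal μp).toReal :=
              ENNReal.toReal_mono ENNReal.ofReal_ne_top hb₁.le
            _ = μp := ENNReal.toReal_ofReal hμp0.le
        have hup := up c₁ c₂ hc₁2 hc₂2.le
        have k1 : (c₂ - c₁) * H c₁ ≤ (c₂ - c₁) * μp :=
          mul_le_mul_of_nonneg_left hHc₁ (by linarith)
        have hCbarτ : Cbar * τ = Cmin * τ + μp * (Cmax - Cmin) := by linarith [hμpkey]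
        have hδexp : δ = (Cmax - c₂) * μp - (Cmax - c₂) * H c₂ := by rw [hδdef]; ring
        nlinarith [hup, k1, hε2, hδ0, hCbarτ, hδexp, hc₁def]
      have haE : ENNReal.ofReal μp ≤ volume (E a) := by
        have hseteq : E a = ⋂ n : ℕ, E (a - (a - Cmin) / (n + 1)) := by
          apply Set.Subset.antisymm
          · refine Set.subset_iInter fun n => hEmono _ a ?_
            have : (0:ℝ) < (a - Cmin) / (n + 1) := div_pos (by linarith) (by positivity)
            linarith
          · intro t ht
            simp only [Set.mem_iInter] at ht
            refine ⟨(ht 0).1, ?_⟩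
            simp only [Set.mem_setOf_eq]
            by_contra hcon
            push_neg at hcon
            obtain ⟨n, hn⟩ := exists_nat_gt ((a - Cmin) / (a - u t))
            have hpos : (0:ℝ) < a - u t := by linarith
            have hn' : (a - Cmin) / (n + 1) < a - u t := by
              rw [div_lt_iff₀ (by positivity)]
              rw [div_lt_iff₀ hpos] at hn
              nlinarith [hpos]
            have := (ht n).2
            simp only [Set.mem_setOf_eq] at this
            linarith
        rw [hseteq, Directed.measure_iInter
          (fun n => (hEmeas _).nullMeasurableSet)
          (Antitone.directed_ge fun n m hnm => by
            apply hEmono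
            have h1 : (0:ℝ) < (n:ℝ) + 1 := by positivity
            have h2 : (n:ℝ) + 1 ≤ (m:ℝ) + 1 := by exact_mod_cast by omega
            have := div_le_div_of_nonneg_left (by linarith : (0:ℝ) ≤ a - Cmin) h1 h2
            linarith)
          ⟨0, hEfin _⟩]
        refine le_iInf fun n => claim_a _ ?_
        have : (0:ℝ) < (a - Cmin) / (n + 1) := div_pos (by linarith) (by positivity)
        linarith
      have haCmax' : a < Cmax := by
        rcases lt_or_eq_of_le haCmax with h | h
        · exact h
        · rw [h] at haE
          exact absurd haE (not_le.2 hcase)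
      have haF : volume (I ∩ {t | a < u t}) ≤ ENNReal.ofReal μp := by
        have hseteq : I ∩ {t | a < u t} = ⋃ n : ℕ, E (a + (Cmax - a) / (n + 1)) := by
          apply Set.Subset.antisymm
          · rintro t ⟨htI, htu⟩
            simp only [Set.mem_setOf_eq] at htu
            have hub : u t ≤ Cmax := (hrange t htI).2
            obtain ⟨n, hn⟩ := exists_nat_gt ((Cmax - a) / (u t - a))
            have hpos : (0:ℝ) < u t - a := by linarith
            refine Set.mem_iUnion.2 ⟨n, htI, ?_⟩
            have hn' : (Cmax - a) / (n + 1) < u t - a := by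
              rw [div_lt_iff₀ (by positivity)]
              rw [div_lt_iff₀ hpos] at hn
              nlinarith [hpos]
            simp only [Set.mem_setOf_eq]
            linarith
          · refine Set.iUnion_subset fun n t ht => ⟨ht.1, ?_⟩
            have h0 : (0:ℝ) < (Cmax - a) / (n + 1) := div_pos (by linarith) (by positivity)
            have := ht.2
            simp only [Set.mem_setOf_eq] at this ⊢
            linarith
        rw [hseteq, Directed.measure_iUnion
          (Monotone.directed_le fun n m hnm => by
            apply hEmono
            have h1 : (0:ℝ) < (n:ℝ) + 1 := by positivity
            have h2 : (n:ℝ) + 1 ≤ (m:ℝ) + 1 := by exact_mod_cast by omega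
            have := div_le_div_of_nonneg_left (by linarith : (0:ℝ) ≤ Cmax - a) h1 h2
            linarith)]
        refine iSup_le fun n => ?_
        refine (claim_b _ ?_ ?_).le
        · have : (0:ℝ) < (Cmax - a) / (n + 1) := div_pos (by linarith) (by positivity)
          linarith
        · have h1 : (1:ℝ) ≤ (n:ℝ) + 1 := by have := Nat.cast_nonneg (α := ℝ) n; linarith
          have : (Cmax - a) / (n + 1) ≤ Cmax - a := by
            rw [div_le_iff₀ (by positivity)]
            nlinarith [h1]
          linarith
      exact ⟨a, ⟨haCmin', haCmax'⟩, haF, haE⟩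
  -- extraction of the sets
  obtain ⟨hCt1, hCt2⟩ := hCt
  set F : Set ℝ := I ∩ {t | Ct < u t} with hFdef
  have hFmeas : MeasurableSet F := hImeas.inter (hmeas measurableSet_Ioi)
  have hFE : F ⊆ E Ct := Set.inter_subset_inter_right _ fun t (ht : Ct < u t) => (le_of_lt ht : Ct ≤ u t)
  have hFfin : volume F ≠ ⊤ := ne_top_of_le_ne_top (hEfin Ct) (measure_mono hFE)
  set r : ℝ := μp - (volume F).toReal with hrdef
  have hr0 : 0 ≤ r := by
    rw [hrdef]
    have h := ENNReal.toReal_mono ENNReal.ofReal_ne_top hFCt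
    rw [ENNReal.toReal_ofReal hμp0.le] at h
    linarith
  have hofr : ENNReal.ofReal r = ENNReal.ofReal μp - volume F := by
    rw [hrdef, ENNReal.ofReal_sub _ ENNReal.toReal_nonneg, ENNReal.ofReal_toReal hFfin]
  have hsub2 : ENNReal.ofReal r ≤ volume (E Ct \ F) := by
    rw [measure_diff hFE hFmeas.nullMeasurableSet hFfin, hofr]
    exact tsub_le_tsub_right hECt _
  obtain ⟨M, hMsub, hMmeas, hMvol⟩ := exists_subset_volume_eq hτ.le (E Ct \ F)
    ((hEmeas Ct).diff hFmeas) (Set.diff_subset.trans Set.inter_subset_left) hr0 hsub2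
  have hdisjFM : Disjoint F M :=
    Set.disjoint_of_subset_right hMsub disjoint_sdiff_self_right
  have hAplusI : F ∪ M ⊆ I :=
    Set.union_subset Set.inter_subset_left
      (hMsub.trans (Set.diff_subset.trans Set.inter_subset_left))
  have hAmeas : MeasurableSet (F ∪ M) := hFmeas.union hMmeas
  have hAfin : volume (F ∪ M) ≠ ⊤ :=
    ne_top_of_le_ne_top (by rw [hIvol]; exact ENNReal.ofReal_ne_top) (measure_mono hAplusI)
  have hAvol : volume (F ∪ M) = ENNReal.ofReal μp := by
    rw [measure_union hdisjFM hMmeas, hMvol, hofr]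
    exact add_tsub_cancel_of_le hFCt
  have hBvol : volume (I \ (F ∪ M)) = ENNReal.ofReal (τ - μp) := by
    rw [measure_diff hAplusI hAmeas.nullMeasurableSet hAfin, hAvol, hIvol,
      ← ENNReal.ofReal_sub _ hμp0.le]
  refine ⟨Ct, ⟨hCt1, hCt2⟩, F ∪ M, I \ (F ∪ M), hAmeas,
    hImeas.diff hAmeas, hAplusI, Set.diff_subset,
    disjoint_sdiff_self_right, hAvol, hBvol, ?_, ?_⟩
  · refine Filter.eventually_of_mem (self_mem_ae_restrict hAmeas) ?_
    rintro t (ht | ht)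
    · exact le_of_lt ht.2
    · exact (hMsub ht).1.2
  · refine Filter.eventually_of_mem (self_mem_ae_restrict (hImeas.diff hAmeas)) ?_
    rintro t ⟨htI, htn⟩
    by_contra hcon
    push_neg at hcon
    exact htn (Or.inl ⟨htI, hcon⟩)
end

section
/- (Optimality of bang-bang controls, $n>1$, single input.) Let $\Phi:[C_{min},C_{max}]\to\mathbb{R}$ be concave and differentiable with nonincreasing derivative. Let $A^-\subseteq[0,\tau)$ be measurable with $\mu(A^-)=\frac{C_{max}-\overline{C}}{C_{max}-C_{min}}\tau$, and define $u(t)=C_{min}$ on $A^-$, $u(t)=C_{max}$ on $[0,\tau)\setminus A^-$. Then $u$ satisfies $\frac{1}{\tau}\int_0^\tau u = \overline{C}$ and for every measurable $w:[0,\tau)\to[C_{min},C_{max}]$ with $\frac{1}{\tau}\int_0^\tau w = \overline{C}$, we have $\int_0^\tau\Phi(u(t))\,dt \le \int_0^\tau\Phi(w(t))\,dt$. -/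
open Real Set MeasureTheory intervalIntegral Classical

theorem bangbang_optimal_single_input
    (τ Cmin Cmax Cbar : ℝ) (hτ : 0 < τ) (hC : 0 < Cmin)
    (h1 : Cmin < Cbar) (h2 : Cbar < Cmax)
    (Φ Φ' : ℝ → ℝ)
    (hconc : ConcaveOn ℝ (Set.Icc Cmin Cmax) Φ)
    (hderiv : ∀ x ∈ Set.Icc Cmin Cmax, HasDerivAt Φ (Φ' x) x)
    (hanti : AntitoneOn Φ' (Set.Icc Cmin Cmax))
    (Aminus : Set ℝ) (hA : MeasurableSet Aminus) (hAsub : Aminus ⊆ Set.Ico 0 τ)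
    (hAmeas : volume Aminus = ENNReal.ofReal ((Cmax - Cbar) / (Cmax - Cmin) * τ))
    (u : ℝ → ℝ) (hu : ∀ t, u t = if t ∈ Aminus then Cmin else Cmax) :
    (1 / τ) * ∫ t in (0 : ℝ)..τ, u t = Cbar ∧
    ∀ w : ℝ → ℝ, Measurable w → (∀ t, w t ∈ Set.Icc Cmin Cmax) →
      (1 / τ) * ∫ t in (0 : ℝ)..τ, w t = Cbar →
      ∫ t in (0 : ℝ)..τ, Φ (u t) ≤ ∫ t in (0 : ℝ)..τ, Φ (w t) := by
  have hCC : Cmin < Cmax := h1.trans h2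
  have hCC' : (0:ℝ) < Cmax - Cmin := by linarith
  set m : ℝ := (Cmax - Cbar) / (Cmax - Cmin) * τ with hm
  have hm0 : 0 < m := mul_pos (div_pos (by linarith) hCC') hτ
  have hmτ : m < τ := by
    rw [hm, div_mul_eq_mul_div, div_lt_iff₀ hCC']
    nlinarith
  -- measure of A ∩ Ioc 0 τ
  have hAIoc : volume (Aminus ∩ Set.Ioc 0 τ) = ENNReal.ofReal m := by
    apply le_antisymm
    · rw [← hAmeas]; exact measure_mono Set.inter_subset_left
    · rw [← hAmeas]
      have hsub : Aminus ⊆ (Aminus ∩ Set.Ioc 0 τ) ∪ {0} := by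
        intro x hx
        rcases hAsub hx with ⟨hx0, hxτ⟩
        rcases eq_or_lt_of_le hx0 with h | h
        · exact Or.inr (by simp [← h])
        · exact Or.inl ⟨hx, h, hxτ.le⟩
      calc volume Aminus ≤ volume ((Aminus ∩ Set.Ioc 0 τ) ∪ {0}) := measure_mono hsub
        _ ≤ volume (Aminus ∩ Set.Ioc 0 τ) + volume ({0} : Set ℝ) := measure_union_le _ _
        _ = volume (Aminus ∩ Set.Ioc 0 τ) := by simp
  -- u as indicator
  have huid : ∀ t, u t = (Cmin - Cmax) * Aminus.indicator (fun _ => (1:ℝ)) t + Cmax := by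
    intro t
    rw [hu t]
    by_cases h : t ∈ Aminus <;> simp [h]
  have humeas : Measurable u := by
    have : u = fun t => (Cmin - Cmax) * Aminus.indicator (fun _ => (1:ℝ)) t + Cmax :=
      funext huid
    rw [this]
    exact ((measurable_const.indicator hA).const_mul _).add_const _
  -- integral of u
  have hind : ∫ t in Set.Ioc (0:ℝ) τ, Aminus.indicator (fun _ => (1:ℝ)) t = m := by
    rw [MeasureTheory.integral_indicator_const (1:ℝ) hA,
      measureReal_def, Measure.restrict_apply hA, hAIoc, smul_eq_mul, mul_one,
      ENNReal.toReal_ofReal hm0.le]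
  have hindInt : IntegrableOn (Aminus.indicator (fun _ => (1:ℝ))) (Set.Ioc 0 τ) volume := by
    apply Integrable.mono' (integrable_const 1)
      ((measurable_const.indicator hA).aestronglyMeasurable)
    filter_upwards with t
    by_cases h : t ∈ Aminus <;> simp [h]
  have huint : ∫ t in (0:ℝ)..τ, u t = Cbar * τ := by
    rw [intervalIntegral.integral_of_le hτ.le]
    have : ∫ t in Set.Ioc (0:ℝ) τ, u t
        = ∫ t in Set.Ioc (0:ℝ) τ, ((Cmin - Cmax) * Aminus.indicator (fun _ => (1:ℝ)) t + Cmax) := by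
      exact integral_congr_ae (Filter.Eventually.of_forall fun t => huid t)
    rw [this, MeasureTheory.integral_add (hindInt.const_mul _) (integrable_const _),
      MeasureTheory.integral_const_mul, hind, MeasureTheory.integral_const]
    simp only [measureReal_def, MeasureTheory.Measure.restrict_apply_univ]
    rw [Real.volume_Ioc, ENNReal.toReal_ofReal (by linarith), smul_eq_mul]
    have key : (Cmin - Cmax) * m + (τ - 0) * Cmax = Cbar * τ := by
      rw [hm]; field_simp; ring
    linarith [key]
  have part1 : (1 / τ) * ∫ t in (0 : ℝ)..τ, u t = Cbar := by
    rw [huint]; field_simp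
  refine ⟨part1, ?_⟩
  intro w hwmeas hwmem hwavg
  -- chord
  set a : ℝ := (Φ Cmax - Φ Cmin) / (Cmax - Cmin) with ha
  set b : ℝ := Φ Cmax - a * Cmax with hb
  have hchordmin : a * Cmin + b = Φ Cmin := by
    rw [hb, ha]; field_simp; ring
  have hchordmax : a * Cmax + b = Φ Cmax := by
    rw [hb]; ring
  have chord : ∀ x ∈ Set.Icc Cmin Cmax, a * x + b ≤ Φ x := by
    intro x hx
    rcases hx with ⟨hx1, hx2⟩
    set p : ℝ := (Cmax - x) / (Cmax - Cmin) with hp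
    set q : ℝ := (x - Cmin) / (Cmax - Cmin) with hq
    have hp0 : 0 ≤ p := div_nonneg (by linarith) hCC'.le
    have hq0 : 0 ≤ q := div_nonneg (by linarith) hCC'.le
    have hpq : p + q = 1 := by rw [hp, hq]; field_simp; ring
    have hkey := hconc.2 (Set.left_mem_Icc.2 hCC.le) (Set.right_mem_Icc.2 hCC.le) hp0 hq0 hpq
    have hx' : p • Cmin + q • Cmax = x := by
      simp only [smul_eq_mul, hp, hq]; field_simp; ring
    rw [hx'] at hkey
    have : a * x + b = p * Φ Cmin + q * Φ Cmax := by
      rw [ha, hb, ha, hp, hq]; field_simp; ring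
    rw [this]
    simpa using hkey
  -- Φ ∘ u = affine ∘ u
  have hΦu : ∀ t, Φ (u t) = a * u t + b := by
    intro t
    rw [hu t]
    by_cases h : t ∈ Aminus <;> simp [h, ← hchordmin, ← hchordmax]
  -- integrability of w
  have hwbd : ∀ t, ‖w t‖ ≤ Cmax := by
    intro t
    rcases hwmem t with ⟨ht1, ht2⟩
    rw [Real.norm_eq_abs, abs_le]
    constructor <;> nlinarith
  have hwint : IntegrableOn w (Set.Ioc 0 τ) volume :=
    Integrable.mono' (integrable_const Cmax) hwmeas.aestronglyMeasurable
      (Filter.Eventually.of_forall hwbd)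
  have hwII : IntervalIntegrable w volume 0 τ := by
    rw [intervalIntegrable_iff_integrableOn_Ioc_of_le hτ.le]; exact hwint
  -- continuity of Φ on Icc, and clamp trick
  have hΦcont : ContinuousOn Φ (Set.Icc Cmin Cmax) := fun x hx =>
    (hderiv x hx).continuousAt.continuousWithinAt
  set g : ℝ → ℝ := fun x => Φ (min Cmax (max Cmin x)) with hg
  have hclampmem : ∀ x : ℝ, min Cmax (max Cmin x) ∈ Set.Icc Cmin Cmax := by
    intro x
    constructor
    · exact le_min hCC.le (le_max_left _ _)
    · exact min_le_left _ _
  have hclampcont : Continuous fun x : ℝ => min Cmax (max Cmin x) :=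
    continuous_const.min (continuous_const.max continuous_id)
  have hgcont : Continuous g := by
    rw [continuous_iff_continuousAt]
    intro x
    exact ContinuousAt.comp (f := fun x : ℝ => min Cmax (max Cmin x))
      ((hderiv _ (hclampmem x)).continuousAt) hclampcont.continuousAt
  have hgw : ∀ t, Φ (w t) = g (w t) := by
    intro t
    rcases hwmem t with ⟨ht1, ht2⟩
    rw [hg]
    simp only [max_eq_right ht1, min_eq_right ht2]
  obtain ⟨M, hM⟩ := isCompact_Icc.exists_bound_of_continuousOn hΦcont
  have hΦwint : IntegrableOn (fun t => Φ (w t)) (Set.Ioc 0 τ) volume := by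
    have hmeas : Measurable fun t => Φ (w t) := by
      have : (fun t => Φ (w t)) = g ∘ w := funext hgw
      rw [this]
      exact hgcont.measurable.comp hwmeas
    exact Integrable.mono' (integrable_const M) hmeas.aestronglyMeasurable
      (Filter.Eventually.of_forall fun t => hM _ (hwmem t))
  have hΦwII : IntervalIntegrable (fun t => Φ (w t)) volume 0 τ := by
    rw [intervalIntegrable_iff_integrableOn_Ioc_of_le hτ.le]; exact hΦwint
  have hawbII : IntervalIntegrable (fun t => a * w t + b) volume 0 τ :=
    ((hwII.const_mul a).add (intervalIntegrable_const))
  -- ∫ (a w + b)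
  have hwτ : ∫ t in (0:ℝ)..τ, w t = Cbar * τ := by
    have := hwavg
    field_simp at this
    linarith
  have hlin : ∫ t in (0:ℝ)..τ, (a * w t + b) = a * (Cbar * τ) + b * τ := by
    rw [intervalIntegral.integral_add (hwII.const_mul a) intervalIntegrable_const,
      intervalIntegral.integral_const_mul, hwτ, intervalIntegral.integral_const,
      smul_eq_mul]
    ring
  have hleft : ∫ t in (0:ℝ)..τ, Φ (u t) = a * (Cbar * τ) + b * τ := by
    have : ∫ t in (0:ℝ)..τ, Φ (u t) = ∫ t in (0:ℝ)..τ, (a * u t + b) :=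
      intervalIntegral.integral_congr (fun t _ => hΦu t)
    rw [this]
    have huII : IntervalIntegrable u volume 0 τ := by
      rw [intervalIntegrable_iff_integrableOn_Ioc_of_le hτ.le]
      apply Integrable.mono' (integrable_const Cmax)
        humeas.aestronglyMeasurable
      filter_upwards with t
      rw [hu t, Real.norm_eq_abs]
      by_cases h : t ∈ Aminus
      · rw [if_pos h, abs_of_pos hC]; linarith
      · rw [if_neg h, abs_of_pos (hC.trans hCC)]
    rw [intervalIntegral.integral_add (huII.const_mul a) intervalIntegrable_const,
      intervalIntegral.integral_const_mul, huint, intervalIntegral.integral_const,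
      smul_eq_mul]
    ring
  rw [hleft, ← hlin]
  exact intervalIntegral.integral_mono_on hτ.le hawbII hΦwII (fun t _ => chord (w t) (hwmem t))
end

section
/- (Periodicity of the PFR solution with time-varying flow rate, $n>1$.) Let $v:\mathbb{R}\to[v_{min},v_{max}]$ with $v_{min}>0$ be measurable and $\tau$-periodic with $\int_0^\tau v(t)\,dt = L$, let $V(t)=\int_0^t v(\xi)\,d\xi$, and let $C_{A_0}$ be $\tau$-periodic with values in $[C_{min},C_{max}]$, $C_{min}>0$. Then for every $s\in\mathbb{R}$, $V(s+\tau) = V(s) + L$, the function $V$ is a strictly increasing bijection of $\mathbb{R}$, and the function $C_A(x,t) = [C_{A_0}(V^{-1}(V(t)-x))^{-(n-1)} + k(n-1)(t - V^{-1}(V(t)-x))]^{-1/(n-1)}$ satisfies $C_A(x, t+\tau) = C_A(x,t)$ for all $x\in[0,L]$, $t\in\mathbb{R}$. -/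
open Real Set MeasureTheory intervalIntegral

theorem pfr_flowrate_periodicity
    (τ L k n Cmin Cmax vmin vmax : ℝ)
    (hτ : 0 < τ) (hL : 0 < L) (hk : 0 < k) (hn : 1 < n)
    (hvmin : 0 < vmin) (hvv : vmin ≤ vmax) (hCmin : 0 < Cmin) (hCC : Cmin ≤ Cmax)
    (v : ℝ → ℝ) (hvmeas : Measurable v)
    (hvrange : ∀ t, v t ∈ Set.Icc vmin vmax)
    (hvper : Function.Periodic v τ)
    (hres : ∫ t in (0 : ℝ)..τ, v t = L)
    (V : ℝ → ℝ) (hV : ∀ t, V t = ∫ s in (0 : ℝ)..t, v s)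
    (C0 : ℝ → ℝ) (hC0range : ∀ t, C0 t ∈ Set.Icc Cmin Cmax)
    (hC0per : Function.Periodic C0 τ) :
    (∀ s : ℝ, V (s + τ) = V s + L) ∧
    StrictMono V ∧ Function.Bijective V ∧
    ∀ W : ℝ → ℝ, Function.LeftInverse W V → Function.RightInverse W V →
      ∀ x ∈ Set.Icc (0 : ℝ) L, ∀ t : ℝ,
        ((C0 (W (V (t + τ) - x))) ^ (-(n - 1)) +
            k * (n - 1) * ((t + τ) - W (V (t + τ) - x))) ^ (-(1 / (n - 1))) =
        ((C0 (W (V t - x))) ^ (-(n - 1)) +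
            k * (n - 1) * (t - W (V t - x))) ^ (-(1 / (n - 1))) := by
  have hvnn : ∀ t, ‖v t‖ ≤ vmax := by
    intro t
    rw [Real.norm_eq_abs, abs_le]
    exact ⟨le_trans (by linarith [hvmin.trans_le hvv]) (hvrange t).1, (hvrange t).2⟩
  have hint : ∀ a b : ℝ, IntervalIntegrable v volume a b := by
    intro a b
    exact (_root_.intervalIntegrable_const (c := vmax)).mono_fun'
      hvmeas.aestronglyMeasurable (Filter.Eventually.of_forall fun t => hvnn t)
  have hdiff : ∀ a b : ℝ, V b - V a = ∫ t in a..b, v t := by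
    intro a b
    rw [hV, hV]
    rw [← intervalIntegral.integral_add_adjacent_intervals (hint 0 a) (hint a b)]
    ring
  have hadd : ∀ s : ℝ, V (s + τ) = V s + L := by
    intro s
    have h1 : V (s + τ) - V s = ∫ t in s..(s + τ), v t := hdiff s (s + τ)
    have h2 : (∫ t in s..(s + τ), v t) = ∫ t in (0:ℝ)..(0 + τ), v t :=
      hvper.intervalIntegral_add_eq s 0
    rw [zero_add, hres] at h2
    linarith
  have hlow : ∀ a b : ℝ, a ≤ b → vmin * (b - a) ≤ V b - V a := by
    intro a b hab
    have h := intervalIntegral.integral_mono_on hab (_root_.intervalIntegrable_const (c := vmin))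
      (hint a b) (fun t _ => (hvrange t).1)
    rw [intervalIntegral.integral_const] at h
    rw [hdiff a b]
    simpa [smul_eq_mul, mul_comm] using h
  have hmono : StrictMono V := by
    intro a b hab
    have := hlow a b hab.le
    nlinarith
  have hV0 : V 0 = 0 := by rw [hV]; simp
  have hcont : Continuous V := by
    have : LipschitzWith (Real.toNNReal vmax) V := by
      apply LipschitzWith.of_dist_le_mul
      intro a b
      rw [Real.dist_eq, Real.dist_eq, Real.coe_toNNReal _ (by linarith)]
      have h1 : V a - V b = ∫ t in b..a, v t := hdiff b a
      rw [h1]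
      exact intervalIntegral.norm_integral_le_of_norm_le_const (fun t _ => hvnn t)
    exact this.continuous
  have htop : Filter.Tendsto V Filter.atTop Filter.atTop := by
    have hev : (fun s : ℝ => vmin * s) ≤ᶠ[Filter.atTop] V :=
      Filter.eventually_atTop.mpr ⟨0, fun s hs => by
        have := hlow 0 s hs; rw [hV0] at this; simpa using by linarith⟩
    have hten : Filter.Tendsto (fun s : ℝ => vmin * s) Filter.atTop Filter.atTop :=
      (Filter.tendsto_id (α := ℝ)).const_mul_atTop hvmin
    exact Filter.tendsto_atTop_mono' Filter.atTop hev hten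
  have hbot : Filter.Tendsto V Filter.atBot Filter.atBot := by
    have hev : V ≤ᶠ[Filter.atBot] (fun s : ℝ => vmin * s) :=
      Filter.eventually_atBot.mpr ⟨0, fun s hs => by
        have := hlow s 0 hs; rw [hV0] at this; simpa using by nlinarith⟩
    have hten : Filter.Tendsto (fun s : ℝ => vmin * s) Filter.atBot Filter.atBot :=
      (Filter.tendsto_id (α := ℝ)).const_mul_atBot hvmin
    exact Filter.tendsto_atBot_mono' Filter.atBot hev hten
  have hsurj : Function.Surjective V := Continuous.surjective hcont htop hbot
  refine ⟨hadd, hmono, ⟨hmono.injective, hsurj⟩, ?_⟩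
  intro W hWl hWr x hx t
  have hWadd : ∀ y : ℝ, W (y + L) = W y + τ := by
    intro y
    have : V (W y + τ) = y + L := by rw [hadd, hWr y]
    rw [← this, hWl]
  have hx1 : V (t + τ) - x = (V t - x) + L := by rw [hadd]; ring
  rw [hx1, hWadd, hC0per]
  ring_nf
end

section
/- (Cost reduction with controlled flow rate.) Under the assumptions that $v$ is measurable, $\tau$-periodic, positive, with $\int_0^\tau v = L$, and $C_{A_0}$ is measurable $\tau$-periodic with values in $[C_{min},C_{max}]$, $C_{min}>0$, and $n>1$, the cost $J = \frac{1}{\tau}\int_0^\tau C_A(L,t)\,v(t)\,dt$ with $C_A$ as in the method-of-characteristics formula equals $\frac{1}{\tau}\int_0^\tau \Psi(C_{A_0}(t))\,v(t)\,dt$, where $\Psi(\xi) = (\xi^{-(n-1)} + k(n-1)\tau)^{-1/(n-1)}$. -/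
open Real Set MeasureTheory intervalIntegral

theorem pfr_cost_controlled_flowrate
    (τ L k n Cmin Cmax : ℝ) (hτ : 0 < τ) (hL : 0 < L) (hk : 0 < k) (hn : 1 < n)
    (hCmin : 0 < Cmin) (hCC : Cmin ≤ Cmax)
    (v : ℝ → ℝ) (hvmeas : Measurable v) (hvpos : ∀ t, 0 < v t)
    (hvper : Function.Periodic v τ)
    (hres : ∫ t in (0 : ℝ)..τ, v t = L)
    (V : ℝ → ℝ) (hV : ∀ t, V t = ∫ s in (0 : ℝ)..t, v s)
    (W : ℝ → ℝ) (hW : Function.LeftInverse W V)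
    (C0 : ℝ → ℝ) (hC0meas : Measurable C0)
    (hC0range : ∀ t, C0 t ∈ Set.Icc Cmin Cmax)
    (hC0per : Function.Periodic C0 τ) :
    (1 / τ) * ∫ t in (0 : ℝ)..τ,
        ((C0 (W (V t - L))) ^ (-(n - 1)) +
          k * (n - 1) * (t - W (V t - L))) ^ (-(1 / (n - 1))) * v t =
    (1 / τ) * ∫ t in (0 : ℝ)..τ,
        ((C0 t) ^ (-(n - 1)) + k * (n - 1) * τ) ^ (-(1 / (n - 1))) * v t := by
  -- v is interval integrable on [0, τ] (otherwise the integral would be 0 ≠ L)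
  have hint : IntervalIntegrable v volume 0 τ := by
    by_contra h
    rw [intervalIntegral.integral_undef h] at hres
    exact absurd hres.symm (ne_of_gt hL)
  -- v is interval integrable on [-τ, 0] by periodicity
  have hneg : IntervalIntegrable v volume (-τ) 0 := by
    have h1 := hint.comp_add_right τ
    simp only [zero_sub, sub_self] at h1
    have : (fun x => v (x + τ)) = v := funext fun x => hvper x
    rwa [this] at h1
  have hall : IntervalIntegrable v volume (-τ) τ := hneg.trans hint
  congr 1
  apply intervalIntegral.integral_congr
  intro t ht
  rw [Set.uIcc_of_le hτ.le] at ht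
  obtain ⟨ht0, htτ⟩ := ht
  have hmem : ∀ x : ℝ, -τ ≤ x → x ≤ τ → x ∈ Set.uIcc (-τ) τ := by
    intro x hx1 hx2
    rw [Set.uIcc_of_le (by linarith : -τ ≤ τ)]
    exact ⟨hx1, hx2⟩
  have hsub1 : Set.uIcc (0:ℝ) (t - τ) ⊆ Set.uIcc (-τ) τ :=
    Set.uIcc_subset_uIcc (hmem 0 (by linarith) (by linarith))
      (hmem _ (by linarith) (by linarith))
  have hsub2 : Set.uIcc (t - τ) t ⊆ Set.uIcc (-τ) τ :=
    Set.uIcc_subset_uIcc (hmem _ (by linarith) (by linarith))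
      (hmem _ (by linarith) (by linarith))
  have h1 : IntervalIntegrable v volume 0 (t - τ) := hall.mono_set hsub1
  have h2 : IntervalIntegrable v volume (t - τ) t := hall.mono_set hsub2
  have hadd := intervalIntegral.integral_add_adjacent_intervals h1 h2
  have hper := hvper.intervalIntegral_add_eq (t - τ) 0
  simp only [sub_add_cancel, zero_add] at hper
  have hkey : V (t - τ) = V t - L := by
    rw [hV, hV]
    rw [hper, hres] at hadd
    linarith
  show (C0 (W (V t - L)) ^ (-(n - 1)) + k * (n - 1) * (t - W (V t - L))) ^ (-(1 / (n - 1))) * v t =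
      (C0 t ^ (-(n - 1)) + k * (n - 1) * τ) ^ (-(1 / (n - 1))) * v t
  rw [← hkey, hW (t - τ), hC0per.sub_eq t, show t - (t - τ) = τ by ring]
end

section
/- (Two-input comparison lemma, flow-rate part.) Let $\Psi:[C_{min},C_{max}]\to(0,\infty)$ be increasing. Let $v:[0,\tau)\to[v_{min},v_{max}]$ be measurable with $\int_0^\tau v = L$, let $B^+, B^-$ partition $[0,\tau)$ with $\mu(B^+) = \frac{L-\tau v_{min}}{v_{max}-v_{min}}$, and define $v_b = v_{max}$ on $B^+$, $v_b = v_{min}$ on $B^-$. Let $A^+\subseteq B^-$, $A^- = [0,\tau)\setminus A^+$, and define $C_b = C_{max}$ on $A^+$, $C_b = C_{min}$ on $A^-$. Then $\int_0^\tau \Psi(C_b(t))(v_b(t)-v(t))\,dt \le \Psi(C_{min})\int_0^\tau (v_b(t)-v(t))\,dt = 0$. -/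
open Real Set MeasureTheory intervalIntegral Classical

theorem two_input_flowrate_comparison
    (τ L vmin vmax Cmin Cmax : ℝ) (hτ : 0 < τ)
    (hvmin : 0 < vmin) (hvv : vmin < vmax)
    (hL1 : vmin * τ ≤ L) (hL2 : L ≤ vmax * τ)
    (hCmin : 0 < Cmin) (hCC : Cmin < Cmax)
    (Ψ : ℝ → ℝ) (hΨpos : ∀ x ∈ Set.Icc Cmin Cmax, 0 < Ψ x)
    (hΨmono : MonotoneOn Ψ (Set.Icc Cmin Cmax))
    (v : ℝ → ℝ) (hvmeas : Measurable v)
    (hvrange : ∀ t ∈ Set.Ico (0 : ℝ) τ, v t ∈ Set.Icc vmin vmax)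
    (hres : ∫ t in (0 : ℝ)..τ, v t = L)
    (Bplus Bminus : Set ℝ) (hBp : MeasurableSet Bplus) (hBm : MeasurableSet Bminus)
    (hBdisj : Disjoint Bplus Bminus) (hBunion : Bplus ∪ Bminus = Set.Ico 0 τ)
    (hBpmeas : volume Bplus = ENNReal.ofReal ((L - τ * vmin) / (vmax - vmin)))
    (vb : ℝ → ℝ) (hvb : ∀ t, vb t = if t ∈ Bplus then vmax else vmin)
    (Aplus : Set ℝ) (hAp : MeasurableSet Aplus) (hApsub : Aplus ⊆ Bminus)
    (Cb : ℝ → ℝ) (hCb : ∀ t, Cb t = if t ∈ Aplus then Cmax else Cmin) :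
    (∫ t in (0 : ℝ)..τ, Ψ (Cb t) * (vb t - v t) ≤
      Ψ Cmin * ∫ t in (0 : ℝ)..τ, (vb t - v t)) ∧
    Ψ Cmin * ∫ t in (0 : ℝ)..τ, (vb t - v t) = 0 := by
  have hvvd : (0:ℝ) < vmax - vmin := by linarith
  set K : ℝ := max |vmin| |vmax| with hK
  set KΨ : ℝ := max |Ψ Cmin| |Ψ Cmax| with hKΨ
  -- measurability
  have hvb' : vb = fun t => if t ∈ Bplus then vmax else vmin := funext hvb
  have hvbmeas : Measurable vb := by
    rw [hvb']; exact Measurable.ite hBp measurable_const measurable_const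
  have hΨCb' : (fun t => Ψ (Cb t)) = fun t => if t ∈ Aplus then Ψ Cmax else Ψ Cmin := by
    funext t; rw [hCb t, apply_ite Ψ]
  have hΨmeas : Measurable (fun t => Ψ (Cb t)) := by
    rw [hΨCb']; exact Measurable.ite hAp measurable_const measurable_const
  -- bounds
  have hvbbd : ∀ t, ‖vb t‖ ≤ K := by
    intro t; rw [hvb t, Real.norm_eq_abs]
    split
    · exact le_max_right _ _
    · exact le_max_left _ _
  have hΨbd : ∀ t, ‖Ψ (Cb t)‖ ≤ KΨ := by
    intro t; rw [hCb t, Real.norm_eq_abs, apply_ite Ψ]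
    split
    · exact le_max_right _ _
    · exact le_max_left _ _
  have hIcoFin : volume (Ico (0:ℝ) τ) < ⊤ := measure_Ico_lt_top
  have hvInt : IntegrableOn v (Ico 0 τ) := by
    refine Integrable.mono' (g := fun _ => K)
      ((integrableOn_const_iff (C := K)).2 (Or.inr hIcoFin))
      (hvmeas.aestronglyMeasurable.restrict) ?_
    rw [ae_restrict_iff' measurableSet_Ico]
    filter_upwards with t ht
    have h := hvrange t ht
    rw [Real.norm_eq_abs]
    exact abs_le_max_abs_abs h.1 h.2
  have hvbInt : IntegrableOn vb (Ico 0 τ) := by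
    refine Integrable.mono' (g := fun _ => K)
      ((integrableOn_const_iff (C := K)).2 (Or.inr hIcoFin))
      (hvbmeas.aestronglyMeasurable.restrict) ?_
    exact Filter.Eventually.of_forall hvbbd
  have hsubInt : IntegrableOn (fun t => vb t - v t) (Ico 0 τ) := hvbInt.sub hvInt
  have hfInt : IntegrableOn (fun t => Ψ (Cb t) * (vb t - v t)) (Ico 0 τ) :=
    hsubInt.bdd_mul (hΨmeas.aestronglyMeasurable.restrict) (c := KΨ) (Filter.Eventually.of_forall hΨbd)
  have hgInt : IntegrableOn (fun t => Ψ Cmin * (vb t - v t)) (Ico 0 τ) :=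
    hsubInt.const_mul _
  -- pointwise inequality on Ico
  have hpt : ∀ t ∈ Ico (0:ℝ) τ, Ψ (Cb t) * (vb t - v t) ≤ Ψ Cmin * (vb t - v t) := by
    intro t ht
    by_cases hA : t ∈ Aplus
    · have htB : t ∈ Bminus := hApsub hA
      have htnB : t ∉ Bplus := fun h => (Set.disjoint_left.mp hBdisj) h htB
      rw [hCb t, if_pos hA, hvb t, if_neg htnB]
      have h1 : Ψ Cmin ≤ Ψ Cmax :=
        hΨmono ⟨le_refl _, hCC.le⟩ ⟨hCC.le, le_refl _⟩ hCC.le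
      have h2 : vmin - v t ≤ 0 := by linarith [(hvrange t ht).1]
      exact mul_le_mul_of_nonpos_right h1 h2
    · rw [hCb t, if_neg hA]
  have hIocIco : ∀ F : ℝ → ℝ, (∫ t in Ioc (0:ℝ) τ, F t) = ∫ t in Ico (0:ℝ) τ, F t :=
    fun F => setIntegral_congr_set (Ico_ae_eq_Ioc.symm)
  -- ∫ vb = L
  have hBsub : Bplus ⊆ Ico 0 τ := hBunion ▸ Set.subset_union_left
  have hInter : Ico (0:ℝ) τ ∩ Bplus = Bplus := Set.inter_eq_self_of_subset_right hBsub
  have hm : (0:ℝ) ≤ (L - τ * vmin) / (vmax - vmin) :=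
    div_nonneg (by linarith [mul_comm vmin τ]) hvvd.le
  have hvbval : ∫ t in Ico (0:ℝ) τ, vb t = L := by
    have hrw : ∀ t, vb t = vmin + (vmax - vmin) * Set.indicator Bplus (fun _ => (1:ℝ)) t := by
      intro t; rw [hvb t]; by_cases h : t ∈ Bplus <;> simp [h] <;> ring
    calc ∫ t in Ico (0:ℝ) τ, vb t
        = ∫ t in Ico (0:ℝ) τ, (vmin + (vmax - vmin) * Set.indicator Bplus (fun _ => (1:ℝ)) t) := by
          exact setIntegral_congr_fun measurableSet_Ico (fun t _ => hrw t)
      _ = (∫ _t in Ico (0:ℝ) τ, vmin) + (vmax - vmin) * ∫ t in Ico (0:ℝ) τ, Set.indicator Bplus (fun _ => (1:ℝ)) t := by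
          rw [integral_add ((integrableOn_const_iff (C := vmin)).2 (Or.inr hIcoFin)), MeasureTheory.integral_const_mul]
          refine Integrable.const_mul ?_ _
          refine Integrable.mono' (g := fun _ => (1:ℝ)) ((integrableOn_const_iff (C := (1:ℝ))).2 (Or.inr hIcoFin))
            ((measurable_one.indicator hBp).aestronglyMeasurable.restrict) ?_
          refine Filter.Eventually.of_forall fun t => ?_
          rw [Real.norm_eq_abs]
          by_cases h : t ∈ Bplus <;> simp [h]
      _ = vmin * τ + (vmax - vmin) * ((L - τ * vmin) / (vmax - vmin)) := by
          rw [setIntegral_indicator hBp, hInter, MeasureTheory.setIntegral_const, MeasureTheory.setIntegral_const]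
          rw [measureReal_def, measureReal_def, Real.volume_Ico, hBpmeas, smul_eq_mul, smul_eq_mul, mul_one,
            ENNReal.toReal_ofReal (by linarith), ENNReal.toReal_ofReal hm]
          ring
      _ = L := by
          rw [mul_div_cancel₀ _ (ne_of_gt hvvd)]; ring
  have hvval : ∫ t in Ico (0:ℝ) τ, v t = L := by
    rw [← hIocIco, ← intervalIntegral.integral_of_le hτ.le, hres]
  have hdiff0 : ∫ t in (0:ℝ)..τ, (vb t - v t) = 0 := by
    rw [intervalIntegral.integral_of_le hτ.le, hIocIco,
      integral_sub hvbInt hvInt, hvbval, hvval, sub_self]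
  constructor
  · calc ∫ t in (0:ℝ)..τ, Ψ (Cb t) * (vb t - v t)
        = ∫ t in Ico (0:ℝ) τ, Ψ (Cb t) * (vb t - v t) := by
          rw [intervalIntegral.integral_of_le hτ.le, hIocIco]
      _ ≤ ∫ t in Ico (0:ℝ) τ, Ψ Cmin * (vb t - v t) :=
          setIntegral_mono_on hfInt hgInt measurableSet_Ico hpt
      _ = Ψ Cmin * ∫ t in (0:ℝ)..τ, (vb t - v t) := by
          rw [MeasureTheory.integral_const_mul, intervalIntegral.integral_of_le hτ.le, hIocIco]
  · rw [hdiff0, mul_zero]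
end
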